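/- arXiv:2305.03531 — 4 statements merged into one kernel-verified Lean document; each statement's English description precedes it below -/
import Mathlib

section
/- For all real numbers β > 0, η ≥ 0 with βη ≤ 1, and every positive integer t, we have (1-βη)^t ≤ 2e · ((βt)^{-1} / ((βt)^{-1} + η))^2, i.e. (1-βη)^t ≤ 2e/(1+βtη)^2. -/
/-- For `β > 0`, `η ≥ 0` with `βη ≤ 1`, and positive integer `t`,
`(1-βη)^t ≤ 2e·((βt)⁻¹/((βt)⁻¹+η))² = 2e/(1+βtη)²`. -/
theorem stmt2 (β η : ℝ) (t : ℕ) (hβ : 0 < β) (hη : 0 ≤ η) (hβη : β * η ≤ 1)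
    (ht : 1 ≤ t) :
    (1 - β * η) ^ t ≤ 2 * Real.exp 1 * ((β * t)⁻¹ / ((β * t)⁻¹ + η)) ^ 2
    ∧ (1 - β * η) ^ t ≤ 2 * Real.exp 1 / (1 + β * t * η) ^ 2 := by
  have htR : (0:ℝ) < t := by exact_mod_cast Nat.lt_of_lt_of_le Nat.zero_lt_one ht
  set y : ℝ := β * t * η with hy
  have hy0 : 0 ≤ y := by positivity
  -- step 1: (1-βη)^t ≤ exp(-y)
  have h1 : (1 - β * η) ^ t ≤ Real.exp (-y) := by
    have hb : 1 - β * η ≤ Real.exp (-(β * η)) := by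
      have := Real.add_one_le_exp (-(β * η)); linarith
    calc (1 - β * η) ^ t ≤ Real.exp (-(β * η)) ^ t :=
          pow_le_pow_left₀ (by linarith) hb t
      _ = Real.exp (-y) := by rw [← Real.exp_nat_mul, hy]; ring_nf
  -- step 2: (1+y)^2 ≤ 2 e exp y
  have h2 : (1 + y) ^ 2 ≤ 2 * Real.exp 1 * Real.exp y := by
    have he1 : 2 ≤ Real.exp 1 := by
      have := Real.add_one_le_exp 1; linarith
    have hh : 1 + y / 2 ≤ Real.exp (y / 2) := by
      have := Real.add_one_le_exp (y / 2); linarith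
    have hmul : Real.exp (y / 2) * Real.exp (y / 2) = Real.exp y := by
      rw [← Real.exp_add]; ring_nf
    nlinarith [Real.exp_pos (y / 2), sq_nonneg (1 + y / 2)]
  have hpos : (0:ℝ) < (1 + y) ^ 2 := by positivity
  have h3 : (1 - β * η) ^ t ≤ 2 * Real.exp 1 / (1 + y) ^ 2 := by
    rw [le_div_iff₀ hpos]
    have hinv : Real.exp (-y) * Real.exp y = 1 := by
      rw [← Real.exp_add]; simp
    have hexpy : 0 < Real.exp y := Real.exp_pos y
    have hmono : (1 - β * η) ^ t * (1 + y) ^ 2 ≤ Real.exp (-y) * (1 + y) ^ 2 :=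
      mul_le_mul_of_nonneg_right h1 (le_of_lt hpos)
    nlinarith [Real.exp_pos (-y)]
  refine ⟨?_, h3⟩
  have heq : (β * t)⁻¹ / ((β * t)⁻¹ + η) = 1 / (1 + y) := by
    have hbt : (β * (t:ℝ)) ≠ 0 := by positivity
    field_simp
    ring
  rw [heq]
  calc (1 - β * η) ^ t ≤ 2 * Real.exp 1 / (1 + y) ^ 2 := h3
    _ = 2 * Real.exp 1 * (1 / (1 + y)) ^ 2 := by rw [div_pow, one_pow, mul_one_div]
end

section
/- Let σ > 0 and let H_σ(ℝ^D) be the Gaussian RKHS with kernel k_σ(x−x') = exp(−‖x−x'‖²/(4σ²)), whose Fourier norm is ‖g‖²_{H_σ} = (2σ)^{-D} ∫ |ĝ(ω)|² e^{σ²‖ω‖²} dω. Then for every 0 < r < 1 and every g ∈ H_σ(ℝ^D), ‖g‖_{L^∞(ℝ^D)} ≤ C r^{-D/4} σ^{D(r−1)/2} ‖g‖_{L²(ℝ^D)}^{1−r} ‖g‖_{H_σ(ℝ^D)}^{r}, where C is a constant depending only on D. -/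
open MeasureTheory Complex
open scoped FourierTransform RealInnerProductSpace ComplexConjugate ENNReal

lemma stmt12_plancherel_aux {D : ℕ} {g : EuclideanSpace ℝ (Fin D) → ℂ}
    (hgc : Continuous g) (hgi : Integrable g) (hFi : Integrable (𝓕 g)) :
    ∫ ω, ‖𝓕 g ω‖ ^ 2 = ∫ x, ‖g x‖ ^ 2 := by
  have hFconj : Integrable (fun ω : EuclideanSpace ℝ (Fin D) => conj (𝓕 g ω)) :=
    (Complex.conjLIE : ℂ ≃ₗᵢ[ℝ] ℂ).integrable_comp_iff.2 hFi
  have key := VectorFourier.integral_fourierIntegral_smul_eq_flip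
      (L := innerₗ (EuclideanSpace ℝ (Fin D))) Real.continuous_fourierChar
      continuous_inner hgi hFconj
  have hinv : ∀ x : EuclideanSpace ℝ (Fin D),
      VectorFourier.fourierIntegral 𝐞 volume (innerₗ (EuclideanSpace ℝ (Fin D))).flip
      (fun ω => conj (𝓕 g ω)) x = conj (g x) := by
    intro x
    have h1 : 𝓕⁻ (𝓕 g) x = g x := hgi.fourierInv_fourier_eq hFi hgc.continuousAt
    rw [← h1, Real.fourierInv_eq, VectorFourier.fourierIntegral, ← integral_conj]
    congr 1
    ext ω
    rw [Circle.smul_def, Circle.smul_def, smul_eq_mul, smul_eq_mul, map_mul]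
    congr 1
    rw [Real.fourierChar_apply, Real.fourierChar_apply, ← Complex.exp_conj]
    congr 1
    have h3 : ((innerₗ (EuclideanSpace ℝ (Fin D))).flip ω) x = ⟪x, ω⟫ := rfl
    rw [h3, real_inner_comm]
    push_cast
    simp only [map_mul, Complex.conj_ofReal, Complex.conj_I, map_ofNat]
    ring
  have hmc : ∫ ω : EuclideanSpace ℝ (Fin D), 𝓕 g ω * conj (𝓕 g ω)
      = ∫ x : EuclideanSpace ℝ (Fin D), g x * conj (g x) := by
    simp only [smul_eq_mul, hinv] at key
    exact key
  have h2 : ∀ z : ℂ, z * conj z = (RCLike.ofReal (‖z‖^2) : ℂ) := fun z => by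
    show z * conj z = ((‖z‖^2 : ℝ) : ℂ)
    rw [Complex.mul_conj]; norm_cast; exact (Complex.sq_norm z).symm
  simp only [h2] at hmc
  rw [integral_ofReal, integral_ofReal] at hmc
  exact_mod_cast hmc

lemma stmt12_ptwise {D : ℕ} {g : EuclideanSpace ℝ (Fin D) → ℂ}
    (hgc : Continuous g) (hgi : Integrable g) (hFi : Integrable (𝓕 g))
    (x : EuclideanSpace ℝ (Fin D)) :
    ‖g x‖ ≤ (∫⁻ ω, ENNReal.ofReal ‖𝓕 g ω‖).toReal := by
  have h1 : 𝓕⁻ (𝓕 g) x = g x := hgi.fourierInv_fourier_eq hFi hgc.continuousAt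
  rw [← h1, Real.fourierInv_eq]
  refine le_trans (norm_integral_le_lintegral_norm _) ?_
  apply le_of_eq
  congr 1
  apply lintegral_congr
  intro ω
  congr 1
  exact Circle.norm_smul _ _

lemma stmt12_gauss_int {D : ℕ} {b : ℝ} (hb : 0 < b) :
    ∫ ω : EuclideanSpace ℝ (Fin D), Real.exp (-b * ‖ω‖^2)
      = (Real.pi / b) ^ ((D : ℝ) / 2) := by
  rw [GaussianFourier.integral_rexp_neg_mul_sq_norm hb]
  norm_num [finrank_euclideanSpace_fin]

lemma stmt12_gauss_integrable {D : ℕ} {b : ℝ} (hb : 0 < b) :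
    Integrable (fun ω : EuclideanSpace ℝ (Fin D) => Real.exp (-b * ‖ω‖^2)) := by
  have h := (GaussianFourier.integrable_cexp_neg_mul_sq_norm_add (b := (b:ℂ)) (by simpa) 0
    (0 : EuclideanSpace ℝ (Fin D))).norm
  refine h.congr (Filter.Eventually.of_forall fun v => ?_)
  simp only [zero_mul, add_zero]
  rw [show -(b:ℂ) * (‖v‖:ℂ)^2 = ((-b*‖v‖^2 : ℝ):ℂ) by push_cast; ring,
    Complex.norm_exp_ofReal]

lemma stmt12_chain {α : Type*} [MeasurableSpace α] {μ : Measure α} {φ : α → ℝ≥0∞} {u : α → ℝ}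
    (hφ : AEMeasurable φ μ) (hu : Measurable u) {r : ℝ} (hr : 0 < r) (hr1 : r < 1) :
    ∫⁻ ω, φ ω ∂μ ≤ ((∫⁻ ω, φ ω ^ (2:ℝ) ∂μ) ^ (1 - r) *
        (∫⁻ ω, φ ω ^ (2:ℝ) * ENNReal.ofReal (Real.exp (u ω)) ∂μ) ^ r) ^ (1/2:ℝ) *
      (∫⁻ ω, ENNReal.ofReal (Real.exp (-(r * u ω))) ∂μ) ^ (1/2:ℝ) := by
  have h1r : (0:ℝ) < 1 - r := by linarith
  have h22 : (2:ℝ).HolderConjugate 2 := ⟨by norm_num, by norm_num, by norm_num⟩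
  have hpq : (1/(1-r)).HolderConjugate (1/r) := by
    refine ⟨?_, by positivity, by positivity⟩
    simp only [one_div, inv_inv]; ring
  have hφ2 : AEMeasurable (fun ω => φ ω ^ (2:ℝ)) μ := hφ.pow_const _
  have hexp : Measurable fun ω => ENNReal.ofReal (Real.exp (u ω)) :=
    (Real.measurable_exp.comp hu).ennreal_ofReal
  have step2 : ∫⁻ ω, φ ω ^ (2:ℝ) * ENNReal.ofReal (Real.exp (r * u ω)) ∂μ ≤
      (∫⁻ ω, φ ω ^ (2:ℝ) ∂μ) ^ (1 - r) *
      (∫⁻ ω, φ ω ^ (2:ℝ) * ENNReal.ofReal (Real.exp (u ω)) ∂μ) ^ r := by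
    have key := ENNReal.lintegral_mul_le_Lp_mul_Lq μ hpq
      (f := fun ω => (φ ω ^ (2:ℝ)) ^ (1 - r))
      (g := fun ω => (φ ω ^ (2:ℝ) * ENNReal.ofReal (Real.exp (u ω))) ^ r)
      ((hφ2.pow_const _)) (((hφ2.mul hexp.aemeasurable)).pow_const _)
    have e1 : ∀ ω, ((φ ω ^ (2:ℝ)) ^ (1 - r) * (φ ω ^ (2:ℝ) * ENNReal.ofReal (Real.exp (u ω))) ^ r)
        = φ ω ^ (2:ℝ) * ENNReal.ofReal (Real.exp (r * u ω)) := by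
      intro ω
      rw [ENNReal.mul_rpow_of_nonneg _ _ hr.le, ← mul_assoc,
        ← ENNReal.rpow_add_of_nonneg _ _ h1r.le hr.le, sub_add_cancel, ENNReal.rpow_one,
        ENNReal.ofReal_rpow_of_nonneg (Real.exp_pos _).le hr.le,
        ← Real.exp_mul, mul_comm (u ω) r]
    have e2 : ∀ ω, ((φ ω ^ (2:ℝ)) ^ (1 - r)) ^ (1/(1-r)) = φ ω ^ (2:ℝ) := by
      intro ω
      rw [← ENNReal.rpow_mul, mul_one_div, div_self h1r.ne', ENNReal.rpow_one]
    have e3 : ∀ ω, ((φ ω ^ (2:ℝ) * ENNReal.ofReal (Real.exp (u ω))) ^ r) ^ (1/r)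
        = φ ω ^ (2:ℝ) * ENNReal.ofReal (Real.exp (u ω)) := by
      intro ω
      rw [← ENNReal.rpow_mul, mul_one_div, div_self hr.ne', ENNReal.rpow_one]
    simp only [Pi.mul_apply, e1, e2, e3, one_div_one_div] at key
    exact key
  have step1 : ∫⁻ ω, φ ω ∂μ ≤
      (∫⁻ ω, φ ω ^ (2:ℝ) * ENNReal.ofReal (Real.exp (r * u ω)) ∂μ) ^ (1/2:ℝ) *
      (∫⁻ ω, ENNReal.ofReal (Real.exp (-(r * u ω))) ∂μ) ^ (1/2:ℝ) := by
    have hgm : Measurable fun ω => ENNReal.ofReal (Real.exp (-(r * u ω))) :=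
      (Real.measurable_exp.comp (hu.const_mul r).neg).ennreal_ofReal
    have hf : AEMeasurable (fun ω => (φ ω ^ (2:ℝ) * ENNReal.ofReal (Real.exp (r * u ω))) ^ (1/2:ℝ)) μ :=
      (hφ2.mul ((Real.measurable_exp.comp (hu.const_mul r)).ennreal_ofReal).aemeasurable).pow_const _
    have key := ENNReal.lintegral_mul_le_Lp_mul_Lq μ h22
      (f := fun ω => (φ ω ^ (2:ℝ) * ENNReal.ofReal (Real.exp (r * u ω))) ^ (1/2:ℝ))
      (g := fun ω => (ENNReal.ofReal (Real.exp (-(r * u ω)))) ^ (1/2:ℝ))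
      hf ((hgm.aemeasurable).pow_const _)
    have e1 : ∀ ω, ((φ ω ^ (2:ℝ) * ENNReal.ofReal (Real.exp (r * u ω))) ^ (1/2:ℝ) *
        (ENNReal.ofReal (Real.exp (-(r * u ω)))) ^ (1/2:ℝ)) = φ ω := by
      intro ω
      rw [← ENNReal.mul_rpow_of_nonneg _ _ (by norm_num : (0:ℝ) ≤ 1/2), mul_assoc,
        ← ENNReal.ofReal_mul (Real.exp_pos _).le, ← Real.exp_add, add_neg_cancel,
        Real.exp_zero, ENNReal.ofReal_one, mul_one, ← ENNReal.rpow_mul]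
      norm_num
    have e2 : ∀ ω, (((φ ω ^ (2:ℝ) * ENNReal.ofReal (Real.exp (r * u ω))) ^ (1/2:ℝ)) ^ (2:ℝ))
        = φ ω ^ (2:ℝ) * ENNReal.ofReal (Real.exp (r * u ω)) := by
      intro ω; rw [← ENNReal.rpow_mul]; norm_num
    have e3 : ∀ ω, (((ENNReal.ofReal (Real.exp (-(r * u ω)))) ^ (1/2:ℝ)) ^ (2:ℝ))
        = ENNReal.ofReal (Real.exp (-(r * u ω))) := by
      intro ω; rw [← ENNReal.rpow_mul]; norm_num
    simp only [Pi.mul_apply, e1, e2, e3] at key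
    exact key
  exact step1.trans (mul_le_mul_left (ENNReal.rpow_le_rpow step2 (by norm_num)) _)

lemma stmt12_const_ineq {D : ℕ} {σ r : ℝ} (hσ : 0 < σ) (hr : 0 < r) (hr1 : r < 1) :
    (Real.pi / (r * σ^2)) ^ ((D:ℝ)/4) ≤
      (2 ^ (D:ℝ) * Real.pi ^ ((D:ℝ)/4)) * r ^ (-(D:ℝ)/4) * σ ^ ((D:ℝ)*(r-1)/2) *
        ((2*σ) ^ (-(D:ℝ))) ^ (r/2) := by
  have h2σ : (0:ℝ) < 2*σ := by linarith
  have hb : (0:ℝ) < r * σ^2 := by positivity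
  have hπb : (0:ℝ) < Real.pi / (r * σ^2) := by positivity
  rw [Real.rpow_def_of_pos hπb, Real.rpow_def_of_pos (by norm_num : (0:ℝ) < 2),
    Real.rpow_def_of_pos Real.pi_pos, Real.rpow_def_of_pos hr,
    Real.rpow_def_of_pos hσ, Real.rpow_def_of_pos (Real.rpow_pos_of_pos h2σ _),
    Real.log_rpow h2σ, Real.log_div Real.pi_pos.ne' hb.ne', Real.log_mul hr.ne'
      (by positivity), Real.log_pow, Real.log_mul (by norm_num : (2:ℝ) ≠ 0) hσ.ne']
  simp only [← Real.exp_add]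
  apply Real.exp_le_exp.2
  have hD : (0:ℝ) ≤ (D:ℝ) := Nat.cast_nonneg D
  have hl2 : (0:ℝ) ≤ Real.log 2 := Real.log_nonneg one_le_two
  push_cast
  nlinarith [mul_nonneg (mul_nonneg hD hl2) (by linarith : (0:ℝ) ≤ 2 - r)]

/-- Interpolation inequality for the Gaussian RKHS with
`‖g‖²_{H_σ} = (2σ)^{-D} ∫ |ĝ(ω)|² e^{σ²‖ω‖²} dω`: there is a constant `C`
depending only on `D` such that for every `σ > 0`, `0 < r < 1`, and `g`,
`‖g‖_{L^∞} ≤ C r^{-D/4} σ^{D(r−1)/2} ‖g‖_{L²}^{1−r} ‖g‖_{H_σ}^{r}`. -/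
theorem stmt12 (D : ℕ) (hD : 1 ≤ D) :
    ∃ C > 0, ∀ σ : ℝ, 0 < σ → ∀ r : ℝ, 0 < r → r < 1 →
      ∀ g : EuclideanSpace ℝ (Fin D) → ℂ,
        Continuous g → Integrable g → Integrable (fun x => ‖g x‖ ^ 2) →
        Integrable (𝓕 g) →
        Integrable (fun ω : EuclideanSpace ℝ (Fin D) =>
          ‖𝓕 g ω‖ ^ 2 * Real.exp (σ ^ 2 * ‖ω‖ ^ 2)) →
        ∀ x, ‖g x‖ ≤ C * r ^ (-(D : ℝ) / 4) * σ ^ ((D : ℝ) * (r - 1) / 2) *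
          (∫ x : EuclideanSpace ℝ (Fin D), ‖g x‖ ^ 2) ^ ((1 - r) / 2) *
          ((2 * σ) ^ (-(D : ℝ)) * ∫ ω : EuclideanSpace ℝ (Fin D),
            ‖𝓕 g ω‖ ^ 2 * Real.exp (σ ^ 2 * ‖ω‖ ^ 2)) ^ (r / 2) := by
  refine ⟨2 ^ (D:ℝ) * Real.pi ^ ((D:ℝ)/4), by positivity, ?_⟩
  intro σ hσ r hr hr1 g hgc hgi hgi2 hFi hFe x
  have h1r : (0:ℝ) < 1 - r := by linarith
  have hb : (0:ℝ) < r * σ^2 := by positivity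
  have h2σ : (0:ℝ) < 2*σ := by linarith
  have hIg0 : 0 ≤ ∫ y : EuclideanSpace ℝ (Fin D), ‖g y‖ ^ 2 :=
    integral_nonneg (fun y => by positivity)
  have hB0 : 0 ≤ ∫ ω : EuclideanSpace ℝ (Fin D), ‖𝓕 g ω‖ ^ 2 * Real.exp (σ ^ 2 * ‖ω‖ ^ 2) :=
    integral_nonneg (fun y => by positivity)
  have hφm : AEMeasurable (fun ω : EuclideanSpace ℝ (Fin D) => ENNReal.ofReal ‖𝓕 g ω‖) :=
    hFi.1.norm.aemeasurable.ennreal_ofReal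
  have hum : Measurable (fun ω : EuclideanSpace ℝ (Fin D) => σ^2 * ‖ω‖^2) :=
    (measurable_norm.pow_const 2).const_mul _
  have hchain := stmt12_chain (μ := (volume : Measure (EuclideanSpace ℝ (Fin D)))) hφm hum hr hr1
  -- integrability of ‖𝓕 g‖²
  have hFk : Integrable (fun ω : EuclideanSpace ℝ (Fin D) => ‖𝓕 g ω‖^2) := by
    refine hFe.mono ((hFi.1.norm.aemeasurable.pow_const 2).aestronglyMeasurable) ?_
    refine Filter.Eventually.of_forall fun ω => ?_
    rw [Real.norm_of_nonneg (by positivity), Real.norm_of_nonneg (by positivity)]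
    nlinarith [Real.one_le_exp (show (0:ℝ) ≤ σ^2*‖ω‖^2 by positivity), sq_nonneg ‖𝓕 g ω‖]
  -- conversion (A)
  have hA : ∫⁻ ω : EuclideanSpace ℝ (Fin D), (ENNReal.ofReal ‖𝓕 g ω‖) ^ (2:ℝ)
      = ENNReal.ofReal (∫ y : EuclideanSpace ℝ (Fin D), ‖g y‖ ^ 2) := by
    have e : ∀ ω : EuclideanSpace ℝ (Fin D), (ENNReal.ofReal ‖𝓕 g ω‖) ^ (2:ℝ)
        = ENNReal.ofReal (‖𝓕 g ω‖^2) := by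
      intro ω
      rw [ENNReal.ofReal_rpow_of_nonneg (norm_nonneg _) (by norm_num)]
      norm_num
    rw [lintegral_congr e, ← ofReal_integral_eq_lintegral_ofReal hFk
      (Filter.Eventually.of_forall fun ω => by positivity),
      stmt12_plancherel_aux hgc hgi hFi]
  -- conversion (B)
  have hBc : ∫⁻ ω : EuclideanSpace ℝ (Fin D),
      (ENNReal.ofReal ‖𝓕 g ω‖) ^ (2:ℝ) * ENNReal.ofReal (Real.exp (σ^2*‖ω‖^2))
      = ENNReal.ofReal (∫ ω : EuclideanSpace ℝ (Fin D), ‖𝓕 g ω‖ ^ 2 *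
          Real.exp (σ ^ 2 * ‖ω‖ ^ 2)) := by
    have e : ∀ ω : EuclideanSpace ℝ (Fin D),
        (ENNReal.ofReal ‖𝓕 g ω‖) ^ (2:ℝ) * ENNReal.ofReal (Real.exp (σ^2*‖ω‖^2))
        = ENNReal.ofReal (‖𝓕 g ω‖ ^ 2 * Real.exp (σ ^ 2 * ‖ω‖ ^ 2)) := by
      intro ω
      rw [ENNReal.ofReal_rpow_of_nonneg (norm_nonneg _) (by norm_num),
        ← ENNReal.ofReal_mul (by positivity)]
      norm_num
    rw [lintegral_congr e, ← ofReal_integral_eq_lintegral_ofReal hFe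
      (Filter.Eventually.of_forall fun ω => by positivity)]
  -- conversion (C)
  have hCc : ∫⁻ ω : EuclideanSpace ℝ (Fin D),
      ENNReal.ofReal (Real.exp (-(r * (σ^2*‖ω‖^2))))
      = ENNReal.ofReal ((Real.pi / (r*σ^2)) ^ ((D:ℝ)/2)) := by
    have e : ∀ ω : EuclideanSpace ℝ (Fin D),
        Real.exp (-(r * (σ^2*‖ω‖^2))) = Real.exp (-(r*σ^2) * ‖ω‖^2) := by
      intro ω; congr 1; ring
    simp only [e]
    rw [← ofReal_integral_eq_lintegral_ofReal (stmt12_gauss_integrable hb)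
      (Filter.Eventually.of_forall fun ω => (Real.exp_pos _).le),
      stmt12_gauss_int hb]
  rw [hA, hBc, hCc] at hchain
  -- real interpolation bound
  have hT : ‖g x‖ ≤ (∫ y : EuclideanSpace ℝ (Fin D), ‖g y‖ ^ 2) ^ ((1-r)/2) *
      (∫ ω : EuclideanSpace ℝ (Fin D), ‖𝓕 g ω‖ ^ 2 * Real.exp (σ ^ 2 * ‖ω‖ ^ 2)) ^ (r/2) *
      (Real.pi / (r*σ^2)) ^ ((D:ℝ)/4) := by
    refine (stmt12_ptwise hgc hgi hFi x).trans ?_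
    have hrw : ((ENNReal.ofReal (∫ y : EuclideanSpace ℝ (Fin D), ‖g y‖ ^ 2)) ^ (1-r) *
        (ENNReal.ofReal (∫ ω : EuclideanSpace ℝ (Fin D), ‖𝓕 g ω‖ ^ 2 *
          Real.exp (σ ^ 2 * ‖ω‖ ^ 2))) ^ r) ^ (1/2:ℝ) *
        (ENNReal.ofReal ((Real.pi / (r*σ^2)) ^ ((D:ℝ)/2))) ^ (1/2:ℝ)
        = ENNReal.ofReal ((∫ y : EuclideanSpace ℝ (Fin D), ‖g y‖ ^ 2) ^ ((1-r)/2) *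
          (∫ ω : EuclideanSpace ℝ (Fin D), ‖𝓕 g ω‖ ^ 2 *
            Real.exp (σ ^ 2 * ‖ω‖ ^ 2)) ^ (r/2) *
          (Real.pi / (r*σ^2)) ^ ((D:ℝ)/4)) := by
      rw [ENNReal.ofReal_rpow_of_nonneg hIg0 h1r.le,
        ENNReal.ofReal_rpow_of_nonneg hB0 hr.le,
        ← ENNReal.ofReal_mul (Real.rpow_nonneg hIg0 _),
        ENNReal.ofReal_rpow_of_nonneg (by positivity) (by norm_num : (0:ℝ) ≤ 1/2),
        ENNReal.ofReal_rpow_of_nonneg (Real.rpow_nonneg (by positivity) _)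
          (by norm_num : (0:ℝ) ≤ 1/2),
        ← ENNReal.ofReal_mul (by positivity)]
      congr 1
      rw [Real.mul_rpow (Real.rpow_nonneg hIg0 _) (Real.rpow_nonneg hB0 _),
        ← Real.rpow_mul hIg0, ← Real.rpow_mul hB0,
        ← Real.rpow_mul (by positivity : (0:ℝ) ≤ Real.pi / (r*σ^2))]
      norm_num
      ring_nf
    rw [hrw] at hchain
    calc (∫⁻ ω : EuclideanSpace ℝ (Fin D), ENNReal.ofReal ‖𝓕 g ω‖).toReal
        ≤ (ENNReal.ofReal ((∫ y : EuclideanSpace ℝ (Fin D), ‖g y‖ ^ 2) ^ ((1-r)/2) *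
          (∫ ω : EuclideanSpace ℝ (Fin D), ‖𝓕 g ω‖ ^ 2 *
            Real.exp (σ ^ 2 * ‖ω‖ ^ 2)) ^ (r/2) *
          (Real.pi / (r*σ^2)) ^ ((D:ℝ)/4))).toReal :=
          ENNReal.toReal_mono ENNReal.ofReal_ne_top hchain
      _ ≤ _ := le_of_eq (ENNReal.toReal_ofReal (by positivity))
  refine hT.trans ?_
  rw [Real.mul_rpow (Real.rpow_nonneg h2σ.le _) hB0]
  calc (∫ y : EuclideanSpace ℝ (Fin D), ‖g y‖ ^ 2) ^ ((1-r)/2) *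
      (∫ ω : EuclideanSpace ℝ (Fin D), ‖𝓕 g ω‖ ^ 2 * Real.exp (σ ^ 2 * ‖ω‖ ^ 2)) ^ (r/2) *
      (Real.pi / (r*σ^2)) ^ ((D:ℝ)/4)
      = (Real.pi / (r*σ^2)) ^ ((D:ℝ)/4) *
        ((∫ y : EuclideanSpace ℝ (Fin D), ‖g y‖ ^ 2) ^ ((1-r)/2) *
         (∫ ω : EuclideanSpace ℝ (Fin D), ‖𝓕 g ω‖ ^ 2 *
           Real.exp (σ ^ 2 * ‖ω‖ ^ 2)) ^ (r/2)) := by ring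
    _ ≤ ((2 ^ (D:ℝ) * Real.pi ^ ((D:ℝ)/4)) * r ^ (-(D:ℝ)/4) * σ ^ ((D:ℝ)*(r-1)/2) *
        ((2*σ) ^ (-(D:ℝ))) ^ (r/2)) *
        ((∫ y : EuclideanSpace ℝ (Fin D), ‖g y‖ ^ 2) ^ ((1-r)/2) *
         (∫ ω : EuclideanSpace ℝ (Fin D), ‖𝓕 g ω‖ ^ 2 *
           Real.exp (σ ^ 2 * ‖ω‖ ^ 2)) ^ (r/2)) := by
        apply mul_le_mul_of_nonneg_right (stmt12_const_ineq hσ hr hr1)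
        positivity
    _ = _ := by ring
end

section
/- Let m > D/2 and M ≥ 1. Then the D-dimensional tail sum satisfies ∑_{ζ ∈ ℕ^D, max_j ζ_j ≥ M+1, all ζ_j ≥ M+1} (1 + ‖ζ‖²/m)^{-m} ≤ C (2m−D)^{-1} m^{m} M^{-2m+D}, where C depends only on D. More precisely, ∫_M^∞ ⋯ ∫_M^∞ (1+‖ζ‖²/m)^{-m} dζ ≤ C (2m−D)^{-1} m^m M^{D−2m}. -/
open MeasureTheory Set

namespace Stmt13Aux

lemma base_pos {D : ℕ} (m : ℝ) (hm : 0 < m) (x : Fin D → ℝ) :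
    0 < 1 + (∑ j, x j ^ 2) / m := by
  have : 0 ≤ (∑ j, x j ^ 2) / m := by positivity
  linarith

lemma f_cont {D : ℕ} (m : ℝ) (hm : 0 < m) :
    Continuous (fun x : Fin D → ℝ => (1 + (∑ j, x j ^ 2) / m) ^ (-m)) := by
  apply Continuous.rpow_const
  · continuity
  · exact fun x => Or.inl (ne_of_gt (base_pos m hm x))

lemma f_nonneg {D : ℕ} (m : ℝ) (hm : 0 < m) (x : Fin D → ℝ) :
    0 ≤ (1 + (∑ j, x j ^ 2) / m) ^ (-m) :=
  Real.rpow_nonneg (base_pos m hm x).le _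

/-- 1D improper integral of `x ^ s` over `Ici c`, as a lintegral. -/

lemma lint_Ici {s c : ℝ} (hs : s < -1) (hc : 0 < c) :
    ∫⁻ x in Ici c, ENNReal.ofReal (x ^ s) = ENNReal.ofReal (-c ^ (s + 1) / (s + 1)) := by
  rw [← restrict_Ioi_eq_restrict_Ici,
    ← ofReal_integral_eq_lintegral_ofReal (integrableOn_Ioi_rpow_of_lt hs hc) ?_,
    integral_Ioi_rpow_of_lt hs hc]
  filter_upwards [ae_restrict_mem measurableSet_Ioi] with x hx
  exact Real.rpow_nonneg (hc.trans hx).le _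

lemma pointA (D : ℕ) (hD : 1 ≤ D) {m : ℝ} (hm0 : 0 < m) {M : ℝ} (hM : 1 ≤ M)
    (x : Fin D → ℝ) (hx : ∀ j, M ≤ x j) :
    (1 + (∑ j, x j ^ 2) / m) ^ (-m) ≤ m ^ m * ∏ j, x j ^ (-(2 * m / (D : ℝ))) := by
  have hD0 : (0 : ℝ) < D := by exact_mod_cast hD
  have hxp : ∀ j, (0 : ℝ) < x j := fun j => lt_of_lt_of_le (by linarith) (hx j)
  set Q := ∑ j, x j ^ 2 with hQ
  set P := ∏ j, x j ^ ((2 : ℝ) / D) with hP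
  have hPpos : 0 < P := Finset.prod_pos fun j _ => Real.rpow_pos_of_pos (hxp j) _
  have hPQ : P ≤ Q := by
    have h1 := Real.geom_mean_le_arith_mean_weighted Finset.univ (fun _ : Fin D => (D : ℝ)⁻¹)
      (fun j => x j ^ 2) (fun i _ => by positivity)
      (by simp [Finset.sum_const, Finset.card_univ]; field_simp)
      (fun i _ => sq_nonneg _)
    calc P = ∏ j, (x j ^ 2 : ℝ) ^ ((D : ℝ)⁻¹) := by
            refine Finset.prod_congr rfl fun j _ => ?_
            rw [← Real.rpow_natCast (x j) 2, ← Real.rpow_mul (hxp j).le]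
            norm_num [div_eq_mul_inv]
      _ ≤ ∑ j, (D : ℝ)⁻¹ * x j ^ 2 := h1
      _ ≤ Q := Finset.sum_le_sum fun j _ => by
            have h2 : (D : ℝ)⁻¹ ≤ 1 := by
              rw [inv_le_one_iff₀]; right; exact_mod_cast hD
            nlinarith [sq_nonneg (x j)]
  have h2 : (1 + Q / m) ^ (-m) ≤ (P / m) ^ (-m) := by
    refine Real.rpow_le_rpow_of_nonpos (by positivity) ?_ (by linarith)
    have : P / m ≤ Q / m := by gcongr
    linarith
  have h3 : (P / m) ^ (-m) = m ^ m * P ^ (-m) := by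
    rw [Real.div_rpow hPpos.le hm0.le, Real.rpow_neg hm0.le m, div_eq_mul_inv, inv_inv, mul_comm]
  have h4 : P ^ (-m) = ∏ j, x j ^ (-(2 * m / (D : ℝ))) := by
    rw [hP, ← Real.finset_prod_rpow _ _ (fun j _ => Real.rpow_nonneg (hxp j).le _) (-m)]
    refine Finset.prod_congr rfl fun j _ => ?_
    rw [← Real.rpow_mul (hxp j).le]
    congr 1
    ring
  calc (1 + Q / m) ^ (-m) ≤ (P / m) ^ (-m) := h2
    _ = m ^ m * ∏ j, x j ^ (-(2 * m / (D : ℝ))) := by rw [h3, h4]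

lemma keyA (D : ℕ) (hD : 1 ≤ D) {m : ℝ} (hm : (D : ℝ) ≤ m) {M : ℝ} (hM : 1 ≤ M) :
    ∫⁻ x : Fin D → ℝ in Set.univ.pi (fun _ => Ici M),
        ENNReal.ofReal ((1 + (∑ j, x j ^ 2) / m) ^ (-m))
      ≤ ENNReal.ofReal ((D : ℝ) ^ D * (2 * m - D)⁻¹ * m ^ m * M ^ ((D : ℝ) - 2 * m)) := by
  have hD0 : (0 : ℝ) < D := by exact_mod_cast hD
  have hm0 : 0 < m := lt_of_lt_of_le hD0 hm
  have hM0 : 0 < M := by linarith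
  have hgap : (0 : ℝ) < 2 * m - D := by linarith
  set s : ℝ := 2 * m / (D : ℝ) with hs
  have hs1 : 1 < s := by rw [hs, lt_div_iff₀ hD0]; linarith
  have hexp : -s < -1 := by linarith
  set H : ℝ → ℝ := (Ici M).indicator (fun u => u ^ (-s)) with hH
  have hHmeas : Measurable H := by
    apply Measurable.indicator _ measurableSet_Ici
    measurability
  have hHnn : ∀ u, 0 ≤ H u := by
    intro u
    rw [hH]
    by_cases h : u ∈ Ici M
    · rw [indicator_of_mem h]
      exact Real.rpow_nonneg (le_trans hM0.le h) _
    · rw [indicator_of_notMem h]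
  have hHint : Integrable H := by
    rw [hH, integrable_indicator_iff measurableSet_Ici]
    exact Iff.mpr integrableOn_Ici_iff_integrableOn_Ioi (integrableOn_Ioi_rpow_of_lt hexp hM0)
  have hprodint : Integrable (fun x : Fin D → ℝ => ∏ j, H (x j)) :=
    Integrable.fintype_prod (f := fun _ : Fin D => H) fun _ => hHint
  have hprodnn : ∀ x : Fin D → ℝ, 0 ≤ ∏ j, H (x j) :=
    fun x => Finset.prod_nonneg fun j _ => hHnn _
  calc ∫⁻ x : Fin D → ℝ in Set.univ.pi (fun _ => Ici M),
        ENNReal.ofReal ((1 + (∑ j, x j ^ 2) / m) ^ (-m))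
      ≤ ∫⁻ x : Fin D → ℝ in Set.univ.pi (fun _ => Ici M),
        ENNReal.ofReal (m ^ m * ∏ j, H (x j)) := by
        refine setLIntegral_mono ?_ ?_
        · exact (measurable_const.mul
            (Finset.measurable_prod _ fun j _ => hHmeas.comp (measurable_pi_apply j))).ennreal_ofReal
        · intro x hx
          have hx' : ∀ j, M ≤ x j := fun j => hx j (mem_univ j)
          apply ENNReal.ofReal_le_ofReal
          have h1 := pointA D hD hm0 hM x hx'
          have h2 : ∀ j, H (x j) = x j ^ (-s) := fun j => indicator_of_mem (hx' j) _
          calc (1 + (∑ j, x j ^ 2) / m) ^ (-m)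
              ≤ m ^ m * ∏ j, x j ^ (-(2 * m / (D : ℝ))) := h1
            _ = m ^ m * ∏ j, H (x j) := by
                congr 1
                exact (Finset.prod_congr rfl fun j _ => (h2 j)).symm
    _ ≤ ∫⁻ x : Fin D → ℝ, ENNReal.ofReal (m ^ m * ∏ j, H (x j)) :=
        setLIntegral_le_lintegral _ _
    _ = ENNReal.ofReal (∫ x : Fin D → ℝ, m ^ m * ∏ j, H (x j)) :=
        (ofReal_integral_eq_lintegral_ofReal (hprodint.const_mul _)
          (ae_of_all _ fun x => mul_nonneg (Real.rpow_nonneg hm0.le _) (hprodnn x))).symm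
    _ ≤ ENNReal.ofReal ((D : ℝ) ^ D * (2 * m - D)⁻¹ * m ^ m * M ^ ((D : ℝ) - 2 * m)) := by
        apply ENNReal.ofReal_le_ofReal
        rw [integral_const_mul, MeasureTheory.volume_pi, MeasureTheory.integral_fintype_prod_eq_pow (ι := Fin D) H,
          Fintype.card_fin]
        have hIH : ∫ u, H u = M ^ (-(s - 1)) * (s - 1)⁻¹ := by
          rw [hH, integral_indicator measurableSet_Ici,
            MeasureTheory.integral_Ici_eq_integral_Ioi, integral_Ioi_rpow_of_lt hexp hM0,
            show (-s + 1 : ℝ) = -(s - 1) by ring, neg_div_neg_eq, div_eq_mul_inv]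
        rw [hIH]
        have e1 : ((M : ℝ) ^ (-(s - 1))) ^ (D : ℕ) = M ^ ((D : ℝ) - 2 * m) := by
          rw [← Real.rpow_natCast (M ^ (-(s - 1))) D, ← Real.rpow_mul hM0.le]
          congr 1
          rw [hs]
          field_simp
          ring
        have hb : ((s - 1)⁻¹ : ℝ) ^ (D : ℕ) ≤ (D : ℝ) ^ D * (2 * m - D)⁻¹ := by
          have hs2 : s - 1 = (2 * m - D) / (D : ℝ) := by
            rw [hs]; field_simp
          rw [hs2, inv_div, div_pow]
          rw [div_eq_mul_inv]
          have h1D : (1 : ℝ) ≤ (D : ℝ) := by exact_mod_cast hD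
          have hsp : (2 * m - (D : ℝ)) ≤ (2 * m - (D : ℝ)) ^ (D : ℕ) :=
            le_self_pow₀ (by linarith) (by omega)
          exact mul_le_mul_of_nonneg_left (inv_anti₀ hgap hsp) (by positivity)
        calc m ^ m * (M ^ (-(s - 1)) * (s - 1)⁻¹) ^ (D : ℕ)
            = m ^ m * M ^ ((D : ℝ) - 2 * m) * ((s - 1)⁻¹) ^ (D : ℕ) := by
              rw [mul_pow, e1]; ring
          _ ≤ m ^ m * M ^ ((D : ℝ) - 2 * m) * ((D : ℝ) ^ D * (2 * m - D)⁻¹) :=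
              mul_le_mul_of_nonneg_left hb (by positivity)
          _ = (D : ℝ) ^ D * (2 * m - D)⁻¹ * m ^ m * M ^ ((D : ℝ) - 2 * m) := by ring

set_option maxHeartbeats 1000000 in
lemma keyB (D : ℕ) (hD : 1 ≤ D) {m : ℝ} (hml : (D : ℝ) / 2 < m) (hmu : m ≤ (D : ℝ))
    {M : ℝ} (hM : 1 ≤ M) :
    ∫⁻ x : Fin D → ℝ in Set.univ.pi (fun _ => Ici M),
        ENNReal.ofReal ((1 + (∑ j, x j ^ 2) / m) ^ (-m))
      ≤ ENNReal.ofReal (2 * D * (2 * m - D)⁻¹ * m ^ m * M ^ ((D : ℝ) - 2 * m)) := by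
  have hD0 : (0 : ℝ) < D := by exact_mod_cast hD
  have hD1 : (1 : ℝ) ≤ D := by exact_mod_cast hD
  have hm0 : 0 < m := by linarith
  have hM0 : 0 < M := by linarith
  have hgap : (0 : ℝ) < 2 * m - D := by linarith
  set S : Set (Fin D → ℝ) := Set.univ.pi (fun _ => Ici M) with hS
  set f : (Fin D → ℝ) → ℝ := fun x => (1 + (∑ j, x j ^ 2) / m) ^ (-m) with hf
  have hfm : Measurable f := (f_cont m hm0).measurable
  set t₀ : ℝ := m ^ m * M ^ (-(2 * m)) with ht₀
  have ht₀0 : 0 < t₀ := by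
    apply mul_pos (Real.rpow_pos_of_pos hm0 _) (Real.rpow_pos_of_pos hM0 _)
  set R : ℝ → ℝ := fun t => Real.sqrt m * t ^ (-(1 / (2 * m))) with hR
  -- pointwise bound f x ≤ m^m * Q^{-m}
  have hfQ : ∀ x : Fin D → ℝ, 0 < (∑ j, x j ^ 2) →
      f x ≤ m ^ m * (∑ j, x j ^ 2) ^ (-m) := by
    intro x hQ0
    have h1 : f x ≤ ((∑ j, x j ^ 2) / m) ^ (-m) := by
      refine Real.rpow_le_rpow_of_nonpos (by positivity) (by linarith) (by linarith)
    have h2 : ((∑ j, x j ^ 2) / m) ^ (-m) = m ^ m * (∑ j, x j ^ 2) ^ (-m) := by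
      rw [Real.div_rpow hQ0.le hm0.le, Real.rpow_neg hm0.le m, div_eq_mul_inv, inv_inv, mul_comm]
    linarith
  have hQM : ∀ x ∈ S, M ^ 2 ≤ ∑ j, x j ^ 2 := by
    intro x hx
    have hx' : M ≤ x ⟨0, hD⟩ := hx ⟨0, hD⟩ (mem_univ _)
    calc M ^ 2 ≤ x ⟨0, hD⟩ ^ 2 := by nlinarith
      _ ≤ ∑ j, x j ^ 2 := Finset.single_le_sum (f := fun j : Fin D => x j ^ 2)
          (fun i _ => sq_nonneg _) (Finset.mem_univ _)
  have hQpos : ∀ x ∈ S, (0:ℝ) < ∑ j, x j ^ 2 := fun x hx => lt_of_lt_of_le (by nlinarith) (hQM x hx)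
  -- f ≤ t₀ on S
  have hft₀ : ∀ x ∈ S, f x ≤ t₀ := by
    intro x hx
    have h1 := hfQ x (hQpos x hx)
    have h2 : (∑ j, x j ^ 2) ^ (-m) ≤ (M ^ 2 : ℝ) ^ (-m) :=
      Real.rpow_le_rpow_of_nonpos (by positivity) (hQM x hx) (by linarith)
    have h3 : ((M : ℝ) ^ 2) ^ (-m) = M ^ (-(2 * m)) := by
      rw [← Real.rpow_natCast M 2, ← Real.rpow_mul hM0.le]
      norm_num
    rw [ht₀, ← h3]
    calc f x ≤ m ^ m * (∑ j, x j ^ 2) ^ (-m) := h1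
      _ ≤ m ^ m * ((M:ℝ) ^ 2) ^ (-m) := by
          exact mul_le_mul_of_nonneg_left h2 (Real.rpow_nonneg hm0.le _)
  -- layer cake
  rw [lintegral_eq_lintegral_meas_lt _ (ae_of_all _ (f_nonneg m hm0)) hfm.aemeasurable]
  have hmeas_lt : ∀ t : ℝ, MeasurableSet {a : Fin D → ℝ | t < f a} :=
    fun t => measurableSet_lt measurable_const hfm
  have hmb : ∀ t ∈ Ioi (0:ℝ), (volume.restrict S) {a | t < f a}
      ≤ (Ioc (0:ℝ) t₀).indicator (fun t => ENNReal.ofReal ((R t) ^ (D:ℕ))) t := by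
    intro t ht
    rw [Measure.restrict_apply (hmeas_lt t)]
    by_cases hcase : t ≤ t₀
    · rw [indicator_of_mem (mem_Ioc.mpr ⟨ht, hcase⟩)]
      have hRt0 : 0 ≤ R t := by
        apply mul_nonneg (Real.sqrt_nonneg _) (Real.rpow_nonneg (le_of_lt ht) _)
      have hsub : {a | t < f a} ∩ S ⊆ Set.univ.pi (fun _ => Ico M (R t)) := by
        rintro x ⟨hxf, hxS⟩ j _
        refine ⟨hxS j (mem_univ _), ?_⟩
        -- x j < R t
        have hQt : (∑ j, x j ^ 2) < m * t ^ (-(1 / m)) := by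
          by_contra hge
          push_neg at hge
          have htm : (0:ℝ) < t ^ (-(1/m)) := Real.rpow_pos_of_pos ht _
          have hQpos' : (0:ℝ) < ∑ j, x j ^ 2 := by nlinarith
          have h1 : f x ≤ ((∑ j, x j ^ 2) / m) ^ (-m) :=
            Real.rpow_le_rpow_of_nonpos (div_pos hQpos' hm0) (by
              have : 0 ≤ (∑ j, x j ^ 2) / m := by positivity
              linarith) (by linarith)
          have h2 : ((∑ j, x j ^ 2) / m) ^ (-m) ≤ (t ^ (-(1/m))) ^ (-m) := by
            refine Real.rpow_le_rpow_of_nonpos htm ?_ (by linarith)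
            rw [le_div_iff₀ hm0]
            linarith
          have h3 : (t ^ (-(1/m))) ^ (-m) = t := by
            rw [← Real.rpow_mul (le_of_lt ht)]
            rw [show (-(1/m)) * (-m) = 1 by field_simp]
            exact Real.rpow_one t
          have := hxf
          simp only [mem_setOf_eq] at this
          linarith
        have hR2 : (R t) ^ 2 = m * t ^ (-(1 / m)) := by
          rw [hR, mul_pow, Real.sq_sqrt hm0.le]
          congr 1
          rw [← Real.rpow_natCast (t ^ (-(1/(2*m)))) 2, ← Real.rpow_mul (le_of_lt ht)]
          congr 1
          field_simp
          norm_num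
        have hxj2 : x j ^ 2 < (R t) ^ 2 := by
          rw [hR2]
          calc x j ^ 2 ≤ ∑ j, x j ^ 2 :=
              Finset.single_le_sum (f := fun j : Fin D => x j ^ 2)
                (fun i _ => sq_nonneg _) (Finset.mem_univ _)
            _ < m * t ^ (-(1/m)) := hQt
        exact lt_of_pow_lt_pow_left₀ 2 hRt0 hxj2
      calc volume ({a | t < f a} ∩ S)
          ≤ volume (Set.univ.pi fun _ : Fin D => Ico M (R t)) := measure_mono hsub
        _ = ∏ _j : Fin D, volume (Ico M (R t)) := volume_pi_pi _
        _ = (ENNReal.ofReal (R t - M)) ^ (D:ℕ) := by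
            rw [Real.volume_Ico, Finset.prod_const, Finset.card_univ, Fintype.card_fin]
        _ ≤ (ENNReal.ofReal (R t)) ^ (D:ℕ) := by
            gcongr
            linarith
        _ = ENNReal.ofReal ((R t) ^ (D:ℕ)) := (ENNReal.ofReal_pow hRt0 D).symm
    · rw [indicator_of_notMem (fun hmem => hcase (mem_Ioc.mp hmem).2)]
      have hempty : {a | t < f a} ∩ S = ∅ := by
        ext x
        simp only [mem_inter_iff, mem_setOf_eq, mem_empty_iff_false, iff_false, not_and]
        intro hxf hxS
        have := hft₀ x hxS
        push_neg at hcase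
        linarith
      simp [hempty]
  set r : ℝ := -((D:ℝ)/(2*m)) with hrdef
  have hr1 : (-1:ℝ) < r := by
    rw [hrdef]
    have : (D:ℝ)/(2*m) < 1 := (div_lt_one (by linarith)).mpr (by linarith)
    linarith
  have hr10 : (0:ℝ) < r + 1 := by linarith
  have hrp1 : r + 1 = (2*m - (D:ℝ))/(2*m) := by
    rw [hrdef]
    field_simp
    ring
  have hii : IntervalIntegrable (fun u : ℝ => u ^ r) volume 0 t₀ :=
    intervalIntegral.intervalIntegrable_rpow' hr1
  have hio : IntegrableOn (fun u : ℝ => u ^ r) (Ioc 0 t₀) volume :=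
    (intervalIntegrable_iff_integrableOn_Ioc_of_le ht₀0.le).mp hii
  have hJ : ∫⁻ t in Ioc (0:ℝ) t₀, ENNReal.ofReal (t ^ r) = ENNReal.ofReal (t₀^(r+1)/(r+1)) := by
    rw [← ofReal_integral_eq_lintegral_ofReal hio ?_]
    · congr 1
      rw [← intervalIntegral.integral_of_le ht₀0.le, integral_rpow (Or.inl hr1),
        Real.zero_rpow (by linarith : r + 1 ≠ 0)]
      ring
    · filter_upwards [ae_restrict_mem measurableSet_Ioc] with u hu
      exact Real.rpow_nonneg hu.1.le _
  calc ∫⁻ t in Ioi (0:ℝ), (volume.restrict S) {a | t < f a}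
      ≤ ∫⁻ t in Ioi (0:ℝ), (Ioc (0:ℝ) t₀).indicator
          (fun t => ENNReal.ofReal ((R t)^(D:ℕ))) t := by
        refine setLIntegral_mono ?_ hmb
        have hrpowm : Measurable fun t : ℝ => t ^ (-(1/(2*m))) := by measurability
        exact (Measurable.ennreal_ofReal
          ((measurable_const.mul hrpowm).pow_const (D:ℕ))).indicator measurableSet_Ioc
    _ = ∫⁻ t in Ioc (0:ℝ) t₀, ENNReal.ofReal ((R t)^(D:ℕ)) := by
        rw [lintegral_indicator measurableSet_Ioc, Measure.restrict_restrict measurableSet_Ioc,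
          inter_eq_left.mpr Ioc_subset_Ioi_self]
    _ = ∫⁻ t in Ioc (0:ℝ) t₀, ENNReal.ofReal (Real.sqrt m ^ (D:ℕ) * t ^ r) := by
        refine setLIntegral_congr_fun measurableSet_Ioc (fun t ht => ?_)
        congr 1
        rw [hR]
        simp only []
        rw [mul_pow]
        congr 1
        rw [← Real.rpow_natCast (t ^ (-(1/(2*m)))) D, ← Real.rpow_mul (le_of_lt ht.1), hrdef]
        congr 1
        field_simp
    _ = ENNReal.ofReal (Real.sqrt m ^ (D:ℕ)) *
          ∫⁻ t in Ioc (0:ℝ) t₀, ENNReal.ofReal (t ^ r) := by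
        rw [← lintegral_const_mul' _ _ ENNReal.ofReal_ne_top]
        refine setLIntegral_congr_fun measurableSet_Ioc (fun t ht => ?_)
        rw [ENNReal.ofReal_mul (by positivity)]
    _ = ENNReal.ofReal (Real.sqrt m ^ (D:ℕ) * (t₀^(r+1)/(r+1))) := by
        rw [hJ, ← ENNReal.ofReal_mul (by positivity)]
    _ ≤ ENNReal.ofReal (2 * D * (2 * m - D)⁻¹ * m ^ m * M ^ ((D : ℝ) - 2 * m)) := by
        apply ENNReal.ofReal_le_ofReal
        have hc1 : Real.sqrt m ^ (D:ℕ) = m ^ ((D:ℝ)/2) := by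
          rw [Real.sqrt_eq_rpow, ← Real.rpow_natCast (m ^ ((1:ℝ)/2)) D,
            ← Real.rpow_mul hm0.le]
          congr 1
          ring
        have ht₀p : t₀ ^ (r+1) = m ^ ((2*m - (D:ℝ))/2) * M ^ ((D:ℝ) - 2*m) := by
          rw [ht₀, Real.mul_rpow (Real.rpow_nonneg hm0.le _) (Real.rpow_nonneg hM0.le _),
            ← Real.rpow_mul hm0.le, ← Real.rpow_mul hM0.le, hrp1]
          congr 2
          · field_simp
          · field_simp
            ring
        have hmm : m ^ ((D:ℝ)/2) * m ^ ((2*m - (D:ℝ))/2) = m ^ m := by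
          rw [← Real.rpow_add hm0]
          congr 1
          ring
        rw [hc1, ht₀p, hrp1]
        have hne1 : (2*m - (D:ℝ)) ≠ 0 := ne_of_gt hgap
        have hne2 : (2*m : ℝ) ≠ 0 := by positivity
        have habc : ∀ a b c : ℝ, a * (b * c / ((2*m-(D:ℝ))/(2*m)))
            = (a*b) * c * (2*m) * (2*m-(D:ℝ))⁻¹ := by
          intro a b c
          field_simp
        rw [habc, hmm]
        have hrhs : 2 * (D:ℝ) * (2 * m - D)⁻¹ * m ^ m * M ^ ((D : ℝ) - 2 * m)
            = m ^ m * M ^ ((D:ℝ) - 2*m) * (2*(D:ℝ)) * (2*m-(D:ℝ))⁻¹ := by ring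
        rw [hrhs]
        gcongr

lemma key (D : ℕ) (hD : 1 ≤ D) {m : ℝ} (hm : (D : ℝ) / 2 < m) {M : ℝ} (hM : 1 ≤ M) :
    ∫⁻ x : Fin D → ℝ in Set.univ.pi (fun _ => Ici M),
        ENNReal.ofReal ((1 + (∑ j, x j ^ 2) / m) ^ (-m))
      ≤ ENNReal.ofReal (((D:ℝ)^D + 2*D) * (2 * m - D)⁻¹ * m ^ m * M ^ ((D : ℝ) - 2 * m)) := by
  have hD0 : (0 : ℝ) < D := by exact_mod_cast hD
  have hm0 : 0 < m := by linarith
  have hgap : (0 : ℝ) < 2 * m - D := by linarith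
  have hM0 : (0:ℝ) < M := by linarith
  rcases le_total m (D : ℝ) with hc | hc
  · refine le_trans (keyB D hD hm hc hM) (ENNReal.ofReal_le_ofReal ?_)
    have h1 : (2*(D:ℝ)) ≤ (D:ℝ)^D + 2*D := le_add_of_nonneg_left (by positivity)
    gcongr
  · refine le_trans (keyA D hD hc hM) (ENNReal.ofReal_le_ofReal ?_)
    have h1 : ((D:ℝ)^D) ≤ (D:ℝ)^D + 2*D := le_add_of_nonneg_right (by positivity)
    gcongr

end Stmt13Aux

open Stmt13Aux in
/-- Tail estimate for the scaled Sobolev weight: for `m > D/2` and `M ≥ 1`,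
the sum over `ζ ∈ ℕ^D` with all coordinates `≥ M+1` of `(1+‖ζ‖²/m)^{-m}` is at
most `C (2m−D)^{-1} m^m M^{D−2m}`, and so is the corresponding integral over
`[M,∞)^D`, with `C` depending only on `D`. -/
theorem stmt13 (D : ℕ) (hD : 1 ≤ D) :
    ∃ C > 0, ∀ m : ℝ, (D : ℝ) / 2 < m → ∀ M : ℕ, 1 ≤ M →
      (∑' p : {ζ : Fin D → ℕ // ∀ j, M + 1 ≤ ζ j},
          (1 + (∑ j, ((p.1 j : ℝ)) ^ 2) / m) ^ (-m))
        ≤ C * (2 * m - D)⁻¹ * m ^ m * (M : ℝ) ^ ((D : ℝ) - 2 * m)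
      ∧ (∫ ζ in {ζ : EuclideanSpace ℝ (Fin D) | ∀ j, (M : ℝ) ≤ ζ j},
            (1 + ‖ζ‖ ^ 2 / m) ^ (-m))
        ≤ C * (2 * m - D)⁻¹ * m ^ m * (M : ℝ) ^ ((D : ℝ) - 2 * m) := by
  have hD0 : (0 : ℝ) < D := by exact_mod_cast hD
  refine ⟨(D:ℝ)^D + 2*D, by positivity, ?_⟩
  intro m hm M hM
  have hm0 : 0 < m := by linarith
  have hgap : (0 : ℝ) < 2 * m - D := by linarith
  have hM1 : (1 : ℝ) ≤ (M : ℝ) := by exact_mod_cast hM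
  have hM0 : (0 : ℝ) < M := by linarith
  set RHS : ℝ := ((D:ℝ)^D + 2*D) * (2 * m - D)⁻¹ * m ^ m * (M:ℝ) ^ ((D : ℝ) - 2 * m) with hRHSdef
  have hRHS0 : 0 ≤ RHS := by
    apply mul_nonneg (mul_nonneg (mul_nonneg (by positivity) (inv_nonneg.mpr hgap.le))
      (Real.rpow_nonneg hm0.le _)) (Real.rpow_nonneg hM0.le _)
  have KEY := key D hD hm hM1
  constructor
  · -- the sum
    set ι := {ζ : Fin D → ℕ // ∀ j, M + 1 ≤ ζ j} with hι
    set a : ι → ℝ := fun p => (1 + (∑ j, ((p.1 j : ℝ)) ^ 2) / m) ^ (-m) with ha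
    have ha0 : ∀ p, 0 ≤ a p := fun p => f_nonneg m hm0 _
    set F : ι → ENNReal := fun p => ENNReal.ofReal (a p) with hF
    set cube : ι → Set (Fin D → ℝ) :=
      fun p => Set.univ.pi (fun j => Ioc ((p.1 j : ℝ) - 1) (p.1 j)) with hcube
    have hcm : ∀ p, MeasurableSet (cube p) :=
      fun p => MeasurableSet.univ_pi fun j => measurableSet_Ioc
    have hvol : ∀ p, volume (cube p) = 1 := by
      intro p
      rw [hcube, volume_pi_pi]
      simp [Real.volume_Ioc]
    have hdisj : Pairwise (Function.onFun Disjoint cube) := by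
      intro p q hpq
      have hne : p.1 ≠ q.1 := fun h => hpq (Subtype.ext h)
      obtain ⟨j, hj⟩ := Function.ne_iff.mp hne
      refine Set.disjoint_left.mpr fun x hxp hxq => ?_
      have h1 := hxp j (mem_univ _)
      have h2 := hxq j (mem_univ _)
      rcases lt_or_gt_of_ne hj with h | h
      · have hc : (p.1 j : ℝ) ≤ (q.1 j : ℝ) - 1 := by
          have : (p.1 j : ℝ) + 1 ≤ (q.1 j : ℝ) := by exact_mod_cast h
          linarith
        have := h1.2
        have := h2.1
        linarith
      · have hc : (q.1 j : ℝ) ≤ (p.1 j : ℝ) - 1 := by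
          have : (q.1 j : ℝ) + 1 ≤ (p.1 j : ℝ) := by exact_mod_cast h
          linarith
        have := h1.1
        have := h2.2
        linarith
    have hcubeS : ∀ p, cube p ⊆ Set.univ.pi (fun _ : Fin D => Ici ((M:ℝ))) := by
      intro p x hx j _
      have h1 := hx j (mem_univ _)
      have hpj : ((M:ℝ) + 1) ≤ (p.1 j : ℝ) := by exact_mod_cast p.2 j
      have := h1.1
      simp only [mem_Ici]
      linarith
    have hlow : ∀ p, F p ≤ ∫⁻ x in cube p,
        ENNReal.ofReal ((1 + (∑ j, x j ^ 2) / m) ^ (-m)) := by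
      intro p
      have heq : F p = ∫⁻ _x in cube p, F p := by
        rw [setLIntegral_const, hvol p, mul_one]
      rw [heq]
      refine setLIntegral_mono ((f_cont m hm0).measurable.ennreal_ofReal) ?_
      intro x hx
      apply ENNReal.ofReal_le_ofReal
      refine Real.rpow_le_rpow_of_nonpos (base_pos m hm0 x) ?_ (by linarith)
      have hsum : (∑ j, x j ^ 2) ≤ ∑ j, ((p.1 j : ℝ)) ^ 2 := by
        refine Finset.sum_le_sum fun j _ => ?_
        have h1 := hx j (mem_univ _)
        have hpj : ((M:ℝ) + 1) ≤ (p.1 j : ℝ) := by exact_mod_cast p.2 j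
        have hxj0 : 0 ≤ x j := by
          have := h1.1
          linarith
        have := h1.2
        nlinarith
      gcongr
    have hsum : ∑' p, F p ≤ ENNReal.ofReal RHS := by
      calc ∑' p, F p
          ≤ ∑' p, ∫⁻ x in cube p, ENNReal.ofReal ((1 + (∑ j, x j ^ 2) / m) ^ (-m)) :=
            ENNReal.tsum_le_tsum hlow
        _ = ∫⁻ x in ⋃ p, cube p, ENNReal.ofReal ((1 + (∑ j, x j ^ 2) / m) ^ (-m)) :=
            (lintegral_iUnion hcm hdisj _).symm
        _ ≤ ∫⁻ x in Set.univ.pi (fun _ : Fin D => Ici ((M:ℝ))),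
              ENNReal.ofReal ((1 + (∑ j, x j ^ 2) / m) ^ (-m)) :=
            lintegral_mono_set (iUnion_subset hcubeS)
        _ ≤ ENNReal.ofReal RHS := KEY
    have hFne : ∀ p, F p ≠ ⊤ := fun p => ENNReal.ofReal_ne_top
    have heqsum : (∑' p, a p) = (∑' p, F p).toReal := by
      rw [ENNReal.tsum_toReal_eq hFne]
      exact tsum_congr fun p => (ENNReal.toReal_ofReal (ha0 p)).symm
    calc ∑' p, a p = (∑' p, F p).toReal := heqsum
      _ ≤ (ENNReal.ofReal RHS).toReal := ENNReal.toReal_mono ENNReal.ofReal_ne_top hsum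
      _ = RHS := ENNReal.toReal_ofReal hRHS0
  · -- the integral
    set T : Set (EuclideanSpace ℝ (Fin D)) := {ζ | ∀ j, (M : ℝ) ≤ ζ j} with hT
    have hnorm : ∀ ζ : EuclideanSpace ℝ (Fin D), ‖ζ‖ ^ 2 = ∑ j, ζ j ^ 2 := by
      intro ζ
      rw [EuclideanSpace.norm_eq, Real.sq_sqrt (Finset.sum_nonneg fun j _ => sq_nonneg _)]
      exact Finset.sum_congr rfl fun j _ => by rw [Real.norm_eq_abs, sq_abs]
    have hcontE : Continuous fun ζ : EuclideanSpace ℝ (Fin D) =>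
        (1 + ‖ζ‖ ^ 2 / m) ^ (-m) := by
      apply Continuous.rpow_const
        (continuous_const.add ((continuous_norm.pow 2).div_const m))
      intro ζ
      left
      have : (0:ℝ) ≤ ‖ζ‖ ^ 2 / m := by positivity
      exact ne_of_gt (show (0:ℝ) < 1 + ‖ζ‖ ^ 2 / m by linarith)
    have hnnE : ∀ ζ : EuclideanSpace ℝ (Fin D), 0 ≤ (1 + ‖ζ‖ ^ 2 / m) ^ (-m) := by
      intro ζ
      apply Real.rpow_nonneg
      have : (0:ℝ) ≤ ‖ζ‖ ^ 2 / m := by positivity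
      linarith
    rw [integral_eq_lintegral_of_nonneg_ae (ae_of_all _ hnnE)
      hcontE.aestronglyMeasurable.restrict]
    set e := (MeasurableEquiv.toLp 2 (Fin D → ℝ)).symm with he
    have hmp := EuclideanSpace.volume_preserving_symm_measurableEquiv_toLp (Fin D)
    have happ : ∀ (ζ : EuclideanSpace ℝ (Fin D)) (j : Fin D), e ζ j = ζ j := fun ζ j => rfl
    have htrans : ∫⁻ ζ in T, ENNReal.ofReal ((1 + ‖ζ‖ ^ 2 / m) ^ (-m))
        = ∫⁻ x in e '' T, ENNReal.ofReal ((1 + (∑ j, x j ^ 2) / m) ^ (-m)) := by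
      rw [← hmp.setLIntegral_comp_emb (MeasurableEquiv.measurableEmbedding e)
        (fun x => ENNReal.ofReal ((1 + (∑ j, x j ^ 2) / m) ^ (-m))) T]
      refine lintegral_congr fun ζ => ?_
      congr 2
      rw [hnorm]
      rfl
    have himg : e '' T = Set.univ.pi (fun _ : Fin D => Ici ((M:ℝ))) := by
      ext x
      simp only [MeasurableEquiv.image_eq_preimage_symm, mem_preimage, hT, mem_setOf_eq,
        mem_pi, mem_univ, forall_true_left, mem_Ici, true_implies]
      constructor
      · intro h j
        have := h j
        rwa [show (e.symm x) j = x j from rfl] at this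
      · intro h j
        rw [show (e.symm x) j = x j from rfl]
        exact h j
    rw [htrans, himg]
    calc (∫⁻ x in Set.univ.pi (fun _ : Fin D => Ici ((M:ℝ))),
          ENNReal.ofReal ((1 + (∑ j, x j ^ 2) / m) ^ (-m))).toReal
        ≤ (ENNReal.ofReal RHS).toReal := ENNReal.toReal_mono ENNReal.ofReal_ne_top KEY
      _ = RHS := ENNReal.toReal_ofReal hRHS0
end

section
/- Let K: ℝ^D → ℝ be a continuous integrable positive definite kernel with Fourier transform F(K), and let ε, ε' be i.i.d. random vectors with characteristic function φ. Define the smoothed kernel K̃_S(x) = E[K(x + ε − ε')]. Then the Fourier transform of K̃_S satisfies F(K̃_S)(ω) = F(K)(ω)·|φ(ω)|² for all ω ∈ ℝ^D. -/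
open MeasureTheory
open scoped RealInnerProductSpace

/-- The Fourier transform with the convention
`F(f)(ω) = (2π)^{-D/2} ∫ f(x) e^{-i⟨ω,x⟩} dx`. -/
noncomputable def ftransform (D : ℕ) (f : EuclideanSpace ℝ (Fin D) → ℂ)
    (ω : EuclideanSpace ℝ (Fin D)) : ℂ :=
  (((2 * Real.pi) ^ (-(D : ℝ) / 2) : ℝ) : ℂ) *
    ∫ x, f x * Complex.exp (-(Complex.I * ((⟪ω, x⟫ : ℝ) : ℂ)))

/-- For a continuous integrable kernel `K` and i.i.d. noises `ε, ε'` with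
characteristic function `φ`, the smoothed kernel `K̃_S(x) = E[K(x + ε − ε')]`
has Fourier transform `F(K̃_S)(ω) = F(K)(ω)·|φ(ω)|²`. -/
theorem stmt15 {Ω : Type*} [MeasurableSpace Ω] (μ : Measure Ω)
    [IsProbabilityMeasure μ] (D : ℕ)
    (K : EuclideanSpace ℝ (Fin D) → ℂ) (hK_cont : Continuous K)
    (hK_int : Integrable K)
    (ε ε' : Ω → EuclideanSpace ℝ (Fin D))
    (hε : Measurable ε) (hε' : Measurable ε')
    (hindep : ProbabilityTheory.IndepFun ε ε' μ)
    (hid : Measure.map ε μ = Measure.map ε' μ)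
    (φ : EuclideanSpace ℝ (Fin D) → ℂ)
    (hφ : ∀ ω : EuclideanSpace ℝ (Fin D),
      φ ω = ∫ a, Complex.exp (Complex.I * ((⟪ω, ε a⟫ : ℝ) : ℂ)) ∂μ)
    (hKS_int : Integrable (fun x : EuclideanSpace ℝ (Fin D) =>
      ∫ a, K (x + ε a - ε' a) ∂μ)) :
    ∀ ω : EuclideanSpace ℝ (Fin D),
      ftransform D (fun x => ∫ a, K (x + ε a - ε' a) ∂μ) ω
        = ftransform D K ω * ((‖φ ω‖ ^ 2 : ℝ) : ℂ) := by
  intro ω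
  have he_norm : ∀ x : EuclideanSpace ℝ (Fin D),
      ‖Complex.exp (-(Complex.I * ((⟪ω, x⟫ : ℝ) : ℂ)))‖ = 1 := by
    intro x
    simp [Complex.norm_exp]
  have hg_norm : ∀ x : EuclideanSpace ℝ (Fin D),
      ‖Complex.exp (Complex.I * ((⟪ω, x⟫ : ℝ) : ℂ))‖ = 1 := by
    intro x
    simp [Complex.norm_exp]
  have he_cont : Continuous fun x : EuclideanSpace ℝ (Fin D) =>
      Complex.exp (-(Complex.I * ((⟪ω, x⟫ : ℝ) : ℂ))) := by
    apply Complex.continuous_exp.comp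
    exact (continuous_const.mul (Complex.continuous_ofReal.comp
      (continuous_const.inner continuous_id))).neg
  have hg_cont : Continuous fun x : EuclideanSpace ℝ (Fin D) =>
      Complex.exp (Complex.I * ((⟪ω, x⟫ : ℝ) : ℂ)) := by
    apply Complex.continuous_exp.comp
    exact continuous_const.mul (Complex.continuous_ofReal.comp
      (continuous_const.inner continuous_id))
  -- conjugate of the characteristic function
  have hconj : (∫ a, Complex.exp (-(Complex.I * ((⟪ω, ε' a⟫ : ℝ) : ℂ))) ∂μ)
      = (starRingEnd ℂ) (φ ω) := by
    have h1 : (∫ a, Complex.exp (-(Complex.I * ((⟪ω, ε' a⟫ : ℝ) : ℂ))) ∂μ)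
        = ∫ v, Complex.exp (-(Complex.I * ((⟪ω, v⟫ : ℝ) : ℂ))) ∂(Measure.map ε' μ) :=
      (integral_map hε'.aemeasurable he_cont.aestronglyMeasurable).symm
    have h2 : (∫ v, Complex.exp (-(Complex.I * ((⟪ω, v⟫ : ℝ) : ℂ))) ∂(Measure.map ε' μ))
        = ∫ a, Complex.exp (-(Complex.I * ((⟪ω, ε a⟫ : ℝ) : ℂ))) ∂μ := by
      rw [← hid]; exact integral_map hε.aemeasurable he_cont.aestronglyMeasurable
    rw [h1, h2, hφ, ← integral_conj]
    congr 1; funext a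
    rw [← Complex.exp_conj, map_mul, Complex.conj_I, Complex.conj_ofReal]
    ring_nf
  -- independence
  have hindep_int : (∫ a, Complex.exp (Complex.I * ((⟪ω, ε a⟫ : ℝ) : ℂ))
        * Complex.exp (-(Complex.I * ((⟪ω, ε' a⟫ : ℝ) : ℂ))) ∂μ)
      = φ ω * (starRingEnd ℂ) (φ ω) := by
    have hmap := (ProbabilityTheory.indepFun_iff_map_prod_eq_prod_map_map
      hε.aemeasurable hε'.aemeasurable).mp hindep
    calc (∫ a, Complex.exp (Complex.I * ((⟪ω, ε a⟫ : ℝ) : ℂ))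
            * Complex.exp (-(Complex.I * ((⟪ω, ε' a⟫ : ℝ) : ℂ))) ∂μ)
        = ∫ p : EuclideanSpace ℝ (Fin D) × EuclideanSpace ℝ (Fin D),
            Complex.exp (Complex.I * ((⟪ω, p.1⟫ : ℝ) : ℂ))
              * Complex.exp (-(Complex.I * ((⟪ω, p.2⟫ : ℝ) : ℂ)))
            ∂(Measure.map (fun a => (ε a, ε' a)) μ) := by
          refine (integral_map (f := fun p : EuclideanSpace ℝ (Fin D) × EuclideanSpace ℝ (Fin D) =>
            Complex.exp (Complex.I * ((⟪ω, p.1⟫ : ℝ) : ℂ))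
              * Complex.exp (-(Complex.I * ((⟪ω, p.2⟫ : ℝ) : ℂ))))
            (hε.prodMk hε').aemeasurable ?_).symm
          exact ((hg_cont.comp continuous_fst).mul (he_cont.comp continuous_snd)).aestronglyMeasurable
      _ = (∫ v, Complex.exp (Complex.I * ((⟪ω, v⟫ : ℝ) : ℂ)) ∂(Measure.map ε μ))
            * (∫ v, Complex.exp (-(Complex.I * ((⟪ω, v⟫ : ℝ) : ℂ))) ∂(Measure.map ε' μ)) := by
          rw [hmap]
          exact integral_prod_mul (fun v => Complex.exp (Complex.I * ((⟪ω, v⟫ : ℝ) : ℂ)))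
            (fun v => Complex.exp (-(Complex.I * ((⟪ω, v⟫ : ℝ) : ℂ))))
      _ = (∫ a, Complex.exp (Complex.I * ((⟪ω, ε a⟫ : ℝ) : ℂ)) ∂μ)
            * (∫ a, Complex.exp (-(Complex.I * ((⟪ω, ε' a⟫ : ℝ) : ℂ))) ∂μ) := by
          rw [integral_map hε.aemeasurable hg_cont.aestronglyMeasurable,
            integral_map hε'.aemeasurable he_cont.aestronglyMeasurable]
      _ = φ ω * (starRingEnd ℂ) (φ ω) := by rw [hconj, ← hφ]
  -- translation identity
  have htrans : ∀ c : EuclideanSpace ℝ (Fin D),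
      (∫ x, K (x + c) * Complex.exp (-(Complex.I * ((⟪ω, x⟫ : ℝ) : ℂ))))
      = (∫ x, K x * Complex.exp (-(Complex.I * ((⟪ω, x⟫ : ℝ) : ℂ))))
          * Complex.exp (Complex.I * ((⟪ω, c⟫ : ℝ) : ℂ)) := by
    intro c
    have h0 : (∫ y : EuclideanSpace ℝ (Fin D),
          K y * Complex.exp (-(Complex.I * ((⟪ω, y⟫ : ℝ) : ℂ))
            + Complex.I * ((⟪ω, c⟫ : ℝ) : ℂ)))
        = (∫ x, K x * Complex.exp (-(Complex.I * ((⟪ω, x⟫ : ℝ) : ℂ))))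
            * Complex.exp (Complex.I * ((⟪ω, c⟫ : ℝ) : ℂ)) := by
      rw [← integral_mul_const]
      congr 1; funext y
      rw [Complex.exp_add]; ring
    rw [← h0, ← integral_add_right_eq_self
      (fun y => K y * Complex.exp (-(Complex.I * ((⟪ω, y⟫ : ℝ) : ℂ))
        + Complex.I * ((⟪ω, c⟫ : ℝ) : ℂ))) c]
    congr 1; funext x
    have hinner : (⟪ω, x + c⟫ : ℝ) = ⟪ω, x⟫ + ⟪ω, c⟫ := inner_add_right ω x c
    congr 1
    rw [hinner]
    push_cast
    ring_nf
  -- integrability on the product space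
  have hslice : ∀ a : Ω, Integrable (fun x =>
      K (x + ε a - ε' a) * Complex.exp (-(Complex.I * ((⟪ω, x⟫ : ℝ) : ℂ))))
      (volume : Measure (EuclideanSpace ℝ (Fin D))) := by
    intro a
    have h1 : Integrable (fun x : EuclideanSpace ℝ (Fin D) => K (x + (ε a - ε' a))) volume :=
      hK_int.comp_add_right (ε a - ε' a)
    have h1' : Integrable (fun x : EuclideanSpace ℝ (Fin D) => K (x + ε a - ε' a)) volume := by
      simpa [add_sub_assoc] using h1
    refine h1'.norm.mono' ?_ ?_
    · have hm : Measurable fun x : EuclideanSpace ℝ (Fin D) => x + ε a - ε' a :=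
        (measurable_id.add_const _).sub_const _
      exact ((hK_cont.measurable.comp hm).mul he_cont.measurable).aestronglyMeasurable
    · filter_upwards with x
      rw [norm_mul, he_norm, mul_one]
  have hmeasF : AEStronglyMeasurable
      (fun p : Ω × EuclideanSpace ℝ (Fin D) =>
        K (p.2 + ε p.1 - ε' p.1) * Complex.exp (-(Complex.I * ((⟪ω, p.2⟫ : ℝ) : ℂ))))
      (μ.prod volume) := by
    have hm : Measurable fun p : Ω × EuclideanSpace ℝ (Fin D) => p.2 + ε p.1 - ε' p.1 :=
      (measurable_snd.add (hε.comp measurable_fst)).sub (hε'.comp measurable_fst)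
    exact ((hK_cont.measurable.comp hm).mul
      (he_cont.measurable.comp measurable_snd)).aestronglyMeasurable
  have hintF : Integrable
      (fun p : Ω × EuclideanSpace ℝ (Fin D) =>
        K (p.2 + ε p.1 - ε' p.1) * Complex.exp (-(Complex.I * ((⟪ω, p.2⟫ : ℝ) : ℂ))))
      (μ.prod volume) := by
    rw [integrable_prod_iff hmeasF]
    constructor
    · filter_upwards with a; exact hslice a
    · have heq : (fun a : Ω => ∫ x, ‖K (x + ε a - ε' a)
            * Complex.exp (-(Complex.I * ((⟪ω, x⟫ : ℝ) : ℂ)))‖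
            ∂(volume : Measure (EuclideanSpace ℝ (Fin D))))
          = fun _ => ∫ x, ‖K x‖ ∂(volume : Measure (EuclideanSpace ℝ (Fin D))) := by
        funext a
        have h1 : (fun x : EuclideanSpace ℝ (Fin D) => ‖K (x + ε a - ε' a)
              * Complex.exp (-(Complex.I * ((⟪ω, x⟫ : ℝ) : ℂ)))‖)
            = fun x => ‖K (x + (ε a - ε' a))‖ := by
          funext x; rw [norm_mul, he_norm, mul_one, add_sub_assoc]
        rw [h1]
        exact integral_add_right_eq_self (fun y => ‖K y‖) (ε a - ε' a)
      rw [heq]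
      exact integrable_const _
  -- main computation
  unfold ftransform
  rw [mul_assoc]
  congr 1
  have step1 : (∫ x : EuclideanSpace ℝ (Fin D),
        (∫ a, K (x + ε a - ε' a) ∂μ) * Complex.exp (-(Complex.I * ((⟪ω, x⟫ : ℝ) : ℂ))))
      = ∫ x : EuclideanSpace ℝ (Fin D), ∫ a, K (x + ε a - ε' a)
          * Complex.exp (-(Complex.I * ((⟪ω, x⟫ : ℝ) : ℂ))) ∂μ := by
    congr 1; funext x
    exact (integral_mul_const _ _).symm
  have step2 : (∫ x : EuclideanSpace ℝ (Fin D), ∫ a, K (x + ε a - ε' a)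
        * Complex.exp (-(Complex.I * ((⟪ω, x⟫ : ℝ) : ℂ))) ∂μ)
      = ∫ a, (∫ x : EuclideanSpace ℝ (Fin D), K (x + ε a - ε' a)
          * Complex.exp (-(Complex.I * ((⟪ω, x⟫ : ℝ) : ℂ)))) ∂μ :=
    (integral_integral_swap hintF).symm
  have step3 : (∫ a, (∫ x : EuclideanSpace ℝ (Fin D), K (x + ε a - ε' a)
        * Complex.exp (-(Complex.I * ((⟪ω, x⟫ : ℝ) : ℂ)))) ∂μ)
      = ∫ a, (∫ x, K x * Complex.exp (-(Complex.I * ((⟪ω, x⟫ : ℝ) : ℂ))))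
          * (Complex.exp (Complex.I * ((⟪ω, ε a⟫ : ℝ) : ℂ))
            * Complex.exp (-(Complex.I * ((⟪ω, ε' a⟫ : ℝ) : ℂ)))) ∂μ := by
    congr 1; funext a
    have h1 : (∫ x : EuclideanSpace ℝ (Fin D), K (x + ε a - ε' a)
          * Complex.exp (-(Complex.I * ((⟪ω, x⟫ : ℝ) : ℂ))))
        = ∫ x : EuclideanSpace ℝ (Fin D), K (x + (ε a - ε' a))
          * Complex.exp (-(Complex.I * ((⟪ω, x⟫ : ℝ) : ℂ))) := by
      congr 1; funext x; rw [add_sub_assoc]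
    rw [h1, htrans (ε a - ε' a)]
    congr 1
    have hinner : (⟪ω, ε a - ε' a⟫ : ℝ) = ⟪ω, ε a⟫ - ⟪ω, ε' a⟫ := inner_sub_right ω (ε a) (ε' a)
    rw [← Complex.exp_add, hinner]
    push_cast
    ring_nf
  rw [step1, step2, step3, integral_const_mul, hindep_int, Complex.mul_conj]
  rw [Complex.normSq_eq_norm_sq]
end
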